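/- Let g : Fin 2 → ℝ be nonnegative with (g 0 + g 1)/2 = 1 and let 1 < q < 2 be real. Setting r(q) = 2^(3-q) * (2^(q-1) - 1) / (q(q-1)), one has (g(0)^(q-1) - g(1)^(q-1)) * (g(0) - g(1)) ≥ (2/ln 2) * r(q) * ((g(0)^q + g(1)^q)/2) * ln((g(0)^q + g(1)^q)/2). -/

import Mathlib

open Real Set

/-- ψ(t) = (q-1) t ((1+t)^(q-2)+(1-t)^(q-2)) - ((1+t)^(q-1)-(1-t)^(q-1)) is ≥ 0 on [0,1). -/
lemma aux_psi_nonneg {q : ℝ} (hq1 : 1 < q) (hq2 : q < 2) {t : ℝ} (ht0 : 0 ≤ t) (ht1 : t < 1) :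
    0 ≤ (q - 1) * t * ((1 + t) ^ (q - 2) + (1 - t) ^ (q - 2))
      - ((1 + t) ^ (q - 1) - (1 - t) ^ (q - 1)) := by
  set ψ : ℝ → ℝ := fun s => (q - 1) * s * ((1 + s) ^ (q - 2) + (1 - s) ^ (q - 2))
      - ((1 + s) ^ (q - 1) - (1 - s) ^ (q - 1)) with hψ
  have key : ∀ x ∈ Ioo (0 : ℝ) 1, HasDerivAt ψ
      ((q - 1) * (q - 2) * x * ((1 + x) ^ (q - 3) - (1 - x) ^ (q - 3))) x := by
    intro x hx
    have h1 : (0:ℝ) < 1 + x := by linarith [hx.1]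
    have h2 : (0:ℝ) < 1 - x := by linarith [hx.2]
    have d1 : HasDerivAt (fun s : ℝ => (1 + s) ^ (q - 2)) (1 * (q - 2) * (1 + x) ^ (q - 2 - 1)) x :=
      (HasDerivAt.const_add 1 (hasDerivAt_id x)).rpow_const (Or.inl h1.ne')
    have d2 : HasDerivAt (fun s : ℝ => (1 - s) ^ (q - 2)) ((-1) * (q - 2) * (1 - x) ^ (q - 2 - 1)) x :=
      (HasDerivAt.const_sub 1 (hasDerivAt_id x)).rpow_const (Or.inl h2.ne')
    have d3 : HasDerivAt (fun s : ℝ => (1 + s) ^ (q - 1)) (1 * (q - 1) * (1 + x) ^ (q - 1 - 1)) x :=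
      (HasDerivAt.const_add 1 (hasDerivAt_id x)).rpow_const (Or.inl h1.ne')
    have d4 : HasDerivAt (fun s : ℝ => (1 - s) ^ (q - 1)) ((-1) * (q - 1) * (1 - x) ^ (q - 1 - 1)) x :=
      (HasDerivAt.const_sub 1 (hasDerivAt_id x)).rpow_const (Or.inl h2.ne')
    have did : HasDerivAt (fun s : ℝ => (q - 1) * s) (q - 1) x := by
      simpa using (hasDerivAt_id x).const_mul (q - 1)
    have := ((did.mul (d1.add d2)).sub (d3.sub d4))
    refine this.congr_deriv ?_
    simp only [Pi.add_apply, Pi.sub_apply]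
    have e1 : (1 + x) ^ (q - 1 - 1) = (1 + x) ^ (q - 2) := by congr 1; ring
    have e2 : (1 - x) ^ (q - 1 - 1) = (1 - x) ^ (q - 2) := by congr 1; ring
    have e3 : (1 + x) ^ (q - 2 - 1) = (1 + x) ^ (q - 3) := by congr 1; ring
    have e4 : (1 - x) ^ (q - 2 - 1) = (1 - x) ^ (q - 3) := by congr 1; ring
    rw [e1, e2, e3, e4]
    ring
  rcases eq_or_lt_of_le ht0 with rfl | ht0'
  · simp [hψ]
  -- monotonicity on [0, t]
  have hmono : MonotoneOn ψ (Icc 0 t) := by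
    apply monotoneOn_of_deriv_nonneg (convex_Icc 0 t)
    · apply ContinuousOn.sub
      · apply ContinuousOn.mul (by fun_prop)
        apply ContinuousOn.add
        · apply ContinuousOn.rpow_const (by fun_prop)
          intro x hx
          exact Or.inl (by simp only [Icc] at hx; intro h; nlinarith [hx.1, hx.2])
        · apply ContinuousOn.rpow_const (by fun_prop)
          intro x hx
          refine Or.inl ?_
          have : x ≤ t := hx.2
          intro h; nlinarith
      · apply ContinuousOn.sub
        · apply ContinuousOn.rpow_const (by fun_prop)
          intro x hx
          exact Or.inl (by intro h; nlinarith [hx.1])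
        · apply ContinuousOn.rpow_const (by fun_prop)
          intro x hx
          refine Or.inl ?_
          have : x ≤ t := hx.2
          intro h; nlinarith
    · intro x hx
      rw [interior_Icc] at hx
      have hx' : x ∈ Ioo (0:ℝ) 1 := ⟨hx.1, lt_trans hx.2 ht1⟩
      exact (key x hx').differentiableAt.differentiableWithinAt
    · intro x hx
      rw [interior_Icc] at hx
      have hx' : x ∈ Ioo (0:ℝ) 1 := ⟨hx.1, lt_trans hx.2 ht1⟩
      rw [(key x hx').deriv]
      have h2 : (0:ℝ) < 1 - x := by linarith [hx'.2]
      have hle : (1 + x) ^ (q - 3) ≤ (1 - x) ^ (q - 3) := by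
        apply Real.rpow_le_rpow_of_nonpos (by linarith [hx'.1])
          (by linarith [hx'.1]) (by linarith)
      have h5 : (0:ℝ) ≤ (2 - q) * ((1 - x) ^ (q - 3) - (1 + x) ^ (q - 3)) :=
        mul_nonneg (by linarith) (by linarith)
      have h6 : (0:ℝ) ≤ (q - 1) * x := mul_nonneg (by linarith) (le_of_lt hx'.1)
      nlinarith [mul_nonneg h6 h5]
  have h0 : ψ 0 = 0 := by simp [hψ]
  have := hmono (left_mem_Icc.mpr ht0) (right_mem_Icc.mpr ht0) ht0
  rw [h0] at this
  exact this

/-- h(t) = q t ((1+t)^(q-1)-(1-t)^(q-1)) - 2((1+t)^q + (1-t)^q - 2) ≥ 0 on [0,1]. -/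
lemma aux_h_nonneg {q : ℝ} (hq1 : 1 < q) (hq2 : q < 2) {t : ℝ} (ht0 : 0 ≤ t) (ht1 : t ≤ 1) :
    0 ≤ q * t * ((1 + t) ^ (q - 1) - (1 - t) ^ (q - 1))
      - 2 * ((1 + t) ^ q + (1 - t) ^ q - 2) := by
  set h : ℝ → ℝ := fun s => q * s * ((1 + s) ^ (q - 1) - (1 - s) ^ (q - 1))
      - 2 * ((1 + s) ^ q + (1 - s) ^ q - 2) with hh
  have key : ∀ x ∈ Ioo (0 : ℝ) 1, HasDerivAt h
      (q * ((q - 1) * x * ((1 + x) ^ (q - 2) + (1 - x) ^ (q - 2))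
        - ((1 + x) ^ (q - 1) - (1 - x) ^ (q - 1)))) x := by
    intro x hx
    have h1 : (0:ℝ) < 1 + x := by linarith [hx.1]
    have h2 : (0:ℝ) < 1 - x := by linarith [hx.2]
    have d3 : HasDerivAt (fun s : ℝ => (1 + s) ^ (q - 1)) (1 * (q - 1) * (1 + x) ^ (q - 1 - 1)) x :=
      (HasDerivAt.const_add 1 (hasDerivAt_id x)).rpow_const (Or.inl h1.ne')
    have d4 : HasDerivAt (fun s : ℝ => (1 - s) ^ (q - 1)) ((-1) * (q - 1) * (1 - x) ^ (q - 1 - 1)) x :=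
      (HasDerivAt.const_sub 1 (hasDerivAt_id x)).rpow_const (Or.inl h2.ne')
    have d5 : HasDerivAt (fun s : ℝ => (1 + s) ^ q) (1 * q * (1 + x) ^ (q - 1)) x :=
      (HasDerivAt.const_add 1 (hasDerivAt_id x)).rpow_const (Or.inl h1.ne')
    have d6 : HasDerivAt (fun s : ℝ => (1 - s) ^ q) ((-1) * q * (1 - x) ^ (q - 1)) x :=
      (HasDerivAt.const_sub 1 (hasDerivAt_id x)).rpow_const (Or.inl h2.ne')
    have did : HasDerivAt (fun s : ℝ => q * s) q x := by
      simpa using (hasDerivAt_id x).const_mul q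
    have := (did.mul (d3.sub d4)).sub (((d5.add d6).sub_const 2).const_mul 2)
    refine this.congr_deriv ?_
    simp only [Pi.add_apply, Pi.sub_apply]
    have e1 : (1 + x) ^ (q - 1 - 1) = (1 + x) ^ (q - 2) := by congr 1; ring
    have e2 : (1 - x) ^ (q - 1 - 1) = (1 - x) ^ (q - 2) := by congr 1; ring
    rw [e1, e2]
    ring
  have hmono : MonotoneOn h (Icc 0 1) := by
    apply monotoneOn_of_deriv_nonneg (convex_Icc 0 1)
    · apply ContinuousOn.sub
      · apply ContinuousOn.mul (by fun_prop)
        apply ContinuousOn.sub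
        · exact ContinuousOn.rpow_const (by fun_prop) (fun x hx => Or.inr (by linarith))
        · exact ContinuousOn.rpow_const (by fun_prop) (fun x hx => Or.inr (by linarith))
      · apply ContinuousOn.mul continuousOn_const
        apply ContinuousOn.sub _ continuousOn_const
        apply ContinuousOn.add
        · exact ContinuousOn.rpow_const (by fun_prop) (fun x hx => Or.inr (by linarith))
        · exact ContinuousOn.rpow_const (by fun_prop) (fun x hx => Or.inr (by linarith))
    · intro x hx
      rw [interior_Icc] at hx
      exact (key x hx).differentiableAt.differentiableWithinAt
    · intro x hx
      rw [interior_Icc] at hx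
      rw [(key x hx).deriv]
      have hψ := aux_psi_nonneg hq1 hq2 (le_of_lt hx.1) hx.2
      exact mul_nonneg (by linarith) hψ
  have h0 : h 0 = 0 := by norm_num [hh]
  have := hmono (left_mem_Icc.mpr (by norm_num)) (⟨ht0, ht1⟩ : t ∈ Icc (0:ℝ) 1) ht0
  rw [h0] at this
  exact this

/-- chord bound for x log x on [1, M]. -/
lemma aux_chord {M x : ℝ} (hM : 1 < M) (hx1 : 1 ≤ x) (hxM : x ≤ M) :
    x * Real.log x ≤ (x - 1) / (M - 1) * (M * Real.log M) := by
  have hMne : M - 1 ≠ 0 := by intro h; linarith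
  have hab : (M - x) / (M - 1) + (x - 1) / (M - 1) = 1 := by
    field_simp
    ring
  have := Real.convexOn_mul_log.2 (Set.mem_Ici.mpr (by norm_num : (0:ℝ) ≤ 1))
    (Set.mem_Ici.mpr (by linarith : (0:ℝ) ≤ M))
    (div_nonneg (by linarith) (by linarith) : (0:ℝ) ≤ (M - x) / (M - 1))
    (div_nonneg (by linarith) (by linarith) : (0:ℝ) ≤ (x - 1) / (M - 1)) hab
  simp only [smul_eq_mul, Real.log_one, mul_one, mul_zero] at this
  have hx : (M - x) / (M - 1) + (x - 1) / (M - 1) * M = x := by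
    field_simp; ring
  rw [hx] at this
  linarith [this]

/-- main two-point inequality for ordered values. -/
lemma aux_key {a b q : ℝ} (hb : 0 ≤ b) (hba : b ≤ a) (hab : a + b = 2)
    (hq1 : 1 < q) (hq2 : q < 2) :
    (a ^ (q - 1) - b ^ (q - 1)) * (a - b) ≥
      2 / Real.log 2 * ((2 : ℝ) ^ (3 - q) * ((2 : ℝ) ^ (q - 1) - 1) / (q * (q - 1))) *
        ((a ^ q + b ^ q) / 2) * Real.log ((a ^ q + b ^ q) / 2) := by
  set t := (a - b) / 2 with htdef
  have ha' : a = 1 + t := by rw [htdef]; linarith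
  have hb' : b = 1 - t := by rw [htdef]; linarith
  have ht0 : 0 ≤ t := by rw [htdef]; linarith
  have ht1 : t ≤ 1 := by rw [htdef]; linarith
  set E := (a ^ q + b ^ q) / 2 with hE
  set M := (2:ℝ) ^ (q - 1) with hM
  have hM1 : 1 < M := by
    rw [hM]
    exact Real.one_lt_rpow_iff_of_pos (by norm_num) |>.mpr (Or.inl ⟨by norm_num, by linarith⟩)
  have hE1 : 1 ≤ E := by
    have b1 : 1 + q * t ≤ (1 + t) ^ q :=
      one_add_mul_self_le_rpow_one_add (by linarith) (le_of_lt hq1)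
    have b2 : 1 + q * (-t) ≤ (1 + (-t)) ^ q :=
      one_add_mul_self_le_rpow_one_add (by linarith) (le_of_lt hq1)
    have : (1 + -t) = 1 - t := by ring
    rw [this] at b2
    rw [hE, ha', hb']
    linarith
  have hEM : E ≤ M := by
    have haq : a ^ q = a * a ^ (q - 1) := by
      nth_rewrite 1 [show q = 1 + (q - 1) by ring]
      rw [Real.rpow_one_add' (by linarith) (by intro h; linarith)]
    have hbq : b ^ q = b * b ^ (q - 1) := by
      nth_rewrite 1 [show q = 1 + (q - 1) by ring]
      rw [Real.rpow_one_add' hb (by intro h; linarith)]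
    have h1 : a ^ (q - 1) ≤ (2:ℝ) ^ (q - 1) :=
      Real.rpow_le_rpow (by linarith) (by linarith) (by linarith)
    have h2 : b ^ (q - 1) ≤ (2:ℝ) ^ (q - 1) :=
      Real.rpow_le_rpow hb (by linarith) (by linarith)
    have hM0 : 0 < M := lt_trans one_pos hM1
    have : a ^ q + b ^ q ≤ 2 * M := by
      rw [haq, hbq, hM]
      have := mul_le_mul_of_nonneg_left h1 (by linarith : (0:ℝ) ≤ a)
      have := mul_le_mul_of_nonneg_left h2 hb
      nlinarith
    rw [hE]; linarith
  -- Step 1: LHS ≥ 8(E-1)/q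
  have hstep1 : (a ^ (q - 1) - b ^ (q - 1)) * (a - b) ≥ 8 * (E - 1) / q := by
    have hh := aux_h_nonneg hq1 hq2 ht0 ht1
    rw [← ha', ← hb'] at hh
    have hq0 : (0:ℝ) < q := by linarith
    rw [hE]
    rw [ge_iff_le, div_le_iff₀ hq0]
    have hab2 : a - b = 2 * t := by rw [htdef]; ring
    rw [hab2]
    nlinarith
  -- Step 2: RHS ≤ 8(E-1)/q
  have hlog2 : (0:ℝ) < Real.log 2 := Real.log_pos (by norm_num)
  have hr : (0:ℝ) < (2 : ℝ) ^ (3 - q) * (M - 1) / (q * (q - 1)) := by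
    apply div_pos
    · apply mul_pos (Real.rpow_pos_of_pos (by norm_num) _) (by linarith)
    · apply mul_pos (by linarith) (by linarith)
  have hchord : E * Real.log E ≤ (E - 1) / (M - 1) * (M * Real.log M) :=
    aux_chord hM1 hE1 hEM
  have hlogM : Real.log M = (q - 1) * Real.log 2 := by
    rw [hM, Real.log_rpow (by norm_num)]
  have hcoef : 2 / Real.log 2 * ((2 : ℝ) ^ (3 - q) * (M - 1) / (q * (q - 1)))
      * ((E - 1) / (M - 1) * (M * Real.log M)) = 8 * (E - 1) / q := by
    rw [hlogM, hM]
    have h23 : (2:ℝ) ^ (3 - q) * (2:ℝ) ^ (q - 1) = 4 := by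
      rw [← Real.rpow_add (by norm_num)]
      norm_num
    have hMne : (2:ℝ) ^ (q - 1) - 1 ≠ 0 := by rw [← hM]; intro h; linarith
    have hLne : Real.log 2 ≠ 0 := by positivity
    have hqne : q ≠ 0 := by intro h; linarith
    have hq1ne : q - 1 ≠ 0 := by intro h; linarith
    field_simp
    linear_combination (a ^ q + b ^ q - 2) * h23
  calc 2 / Real.log 2 * ((2 : ℝ) ^ (3 - q) * ((2 : ℝ) ^ (q - 1) - 1) / (q * (q - 1))) * E
        * Real.log E
      = 2 / Real.log 2 * ((2 : ℝ) ^ (3 - q) * (M - 1) / (q * (q - 1))) * (E * Real.log E) := by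
        rw [hM]; ring
    _ ≤ 2 / Real.log 2 * ((2 : ℝ) ^ (3 - q) * (M - 1) / (q * (q - 1)))
        * ((E - 1) / (M - 1) * (M * Real.log M)) := by
        apply mul_le_mul_of_nonneg_left hchord
        positivity
    _ = 8 * (E - 1) / q := hcoef
    _ ≤ (a ^ (q - 1) - b ^ (q - 1)) * (a - b) := hstep1

theorem two_point_logSobolev_q_lt_two (g : Fin 2 → ℝ) (hg : ∀ i, 0 ≤ g i)
    (hmean : (g 0 + g 1) / 2 = 1) (q : ℝ) (hq1 : 1 < q) (hq2 : q < 2) :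
    (g 0 ^ (q - 1) - g 1 ^ (q - 1)) * (g 0 - g 1) ≥
      2 / Real.log 2 * ((2 : ℝ) ^ (3 - q) * ((2 : ℝ) ^ (q - 1) - 1) / (q * (q - 1))) *
        ((g 0 ^ q + g 1 ^ q) / 2) * Real.log ((g 0 ^ q + g 1 ^ q) / 2) := by
  have hsum : g 0 + g 1 = 2 := by linarith
  rcases le_total (g 1) (g 0) with hle | hle
  · exact aux_key (hg 1) hle hsum hq1 hq2
  · have := aux_key (hg 0) hle (by linarith) hq1 hq2
    calc 2 / Real.log 2 * ((2 : ℝ) ^ (3 - q) * ((2 : ℝ) ^ (q - 1) - 1) / (q * (q - 1))) *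
        ((g 0 ^ q + g 1 ^ q) / 2) * Real.log ((g 0 ^ q + g 1 ^ q) / 2)
        = 2 / Real.log 2 * ((2 : ℝ) ^ (3 - q) * ((2 : ℝ) ^ (q - 1) - 1) / (q * (q - 1))) *
        ((g 1 ^ q + g 0 ^ q) / 2) * Real.log ((g 1 ^ q + g 0 ^ q) / 2) := by ring_nf
      _ ≤ (g 1 ^ (q - 1) - g 0 ^ (q - 1)) * (g 1 - g 0) := this
      _ = (g 0 ^ (q - 1) - g 1 ^ (q - 1)) * (g 0 - g 1) := by ring
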